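/- Let d be a tree metric realized by the caterpillar tree Cat(n) (the binary tree with cherries {1,2} and {n−1,n} and remaining leaves 3, …, n−2 attached in increasing order along the central path), with strictly positive internal edge weights. Then for every quadruple i < j < k < l one has d_{ij} + d_{kl} < d_{ik} + d_{jl} and d_{ik} + d_{jl} = d_{il} + d_{jk}. -/
import Mathlib


/-- a tree metric realized by the caterpillar `Cat(n)` with
strictly positive internal edge weights satisfies, for `i < j < k < l`,
`d_ij + d_kl < d_ik + d_jl = d_il + d_jk`.  The caterpillar is parameterized
explicitly: its internal path vertices are `c_1, …, c_{n−2}` joined by internal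
edges `t_1, …, t_{n−3}` (`t_m` between `c_m` and `c_{m+1}`); leaf `i` is
attached at `c_{pos i}` by a leaf edge of arbitrary weight `x i`, where
`pos 1 = pos 2 = 1`, `pos i = i − 1` for `3 ≤ i ≤ n−2` and
`pos (n−1) = pos n = n − 2`; thus for `i < j` the tree metric is
`d i j = x i + x j + ∑_{m = pos i}^{pos j − 1} t m`. -/
theorem stmt_12 (n : ℕ) (hn : 4 ≤ n)
    (x t : ℕ → ℝ) (ht : ∀ m, 1 ≤ m → m ≤ n - 3 → 0 < t m)
    (pos : ℕ → ℕ)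
    (hpos : ∀ i, pos i = if i ≤ 2 then 1 else if i ≤ n - 2 then i - 1 else n - 2)
    (d : ℕ → ℕ → ℝ)
    (hd : ∀ i j, i < j → d i j = x i + x j + ∑ m ∈ Finset.Ico (pos i) (pos j), t m)
    (i j k l : ℕ) (h1 : 1 ≤ i) (hij : i < j) (hjk : j < k) (hkl : k < l) (hln : l ≤ n) :
    d i j + d k l < d i k + d j l ∧ d i k + d j l = d i l + d j k := by
  have hmono : ∀ a b : ℕ, a ≤ b → pos a ≤ pos b := by
    intro a b hab
    rw [hpos a, hpos b]
    split_ifs <;> omega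
  have hjk' : pos j < pos k := by
    rw [hpos j, hpos k]
    split_ifs <;> omega
  have hpj1 : 1 ≤ pos j := by rw [hpos j]; split_ifs <;> omega
  have hpk : pos k ≤ n - 2 := by rw [hpos k]; split_ifs <;> omega
  have hij' : pos i ≤ pos j := hmono i j hij.le
  have hkl' : pos k ≤ pos l := hmono k l hkl.le
  have hjk'' : pos j ≤ pos k := hjk'.le
  -- sum splittings
  have s1 : ∑ m ∈ Finset.Ico (pos i) (pos j), t m + ∑ m ∈ Finset.Ico (pos j) (pos k), t m
      = ∑ m ∈ Finset.Ico (pos i) (pos k), t m :=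
    Finset.sum_Ico_consecutive t hij' hjk''
  have s2 : ∑ m ∈ Finset.Ico (pos j) (pos k), t m + ∑ m ∈ Finset.Ico (pos k) (pos l), t m
      = ∑ m ∈ Finset.Ico (pos j) (pos l), t m :=
    Finset.sum_Ico_consecutive t hjk'' hkl'
  have s3 : ∑ m ∈ Finset.Ico (pos i) (pos k), t m + ∑ m ∈ Finset.Ico (pos k) (pos l), t m
      = ∑ m ∈ Finset.Ico (pos i) (pos l), t m :=
    Finset.sum_Ico_consecutive t (le_trans hij' hjk'') hkl'
  have spos : 0 < ∑ m ∈ Finset.Ico (pos j) (pos k), t m := by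
    apply Finset.sum_pos
    · intro m hm
      rw [Finset.mem_Ico] at hm
      exact ht m (le_trans hpj1 hm.1) (by omega)
    · exact ⟨pos j, Finset.mem_Ico.mpr ⟨le_refl _, hjk'⟩⟩
  rw [hd i j hij, hd k l hkl, hd i k (hij.trans hjk), hd j l (hjk.trans hkl),
    hd i l (hij.trans (hjk.trans hkl)), hd j k hjk]
  constructor
  · linarith
  · linarith
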